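/- arXiv:1811.04007 — 4 statements merged into one kernel-verified Lean document; each statement's English description precedes it below -/
import Mathlib

section
/- A functor f : C → D is an equivalence of categories if and only if f is fully faithful and essentially surjective, where essential surjectivity is witnessed by isomorphisms, and moreover in this case any fully faithful functor that is surjective on objects and an equivalence has the right lifting property with respect to all functors that are injective on objects. -/
open CategoryTheory

theorem lift_aux {C D : Type*} [Category C] [Category D] (f : C ⥤ D)
    [f.IsEquivalence] (hsurj : Function.Surjective f.obj)
    {A B : Type*} [Category A] [Category B] (i : A ⥤ B)
    (hinj : Function.Injective i.obj)
    (α : A ⥤ C) (β : B ⥤ D) (sq : α ⋙ f = i ⋙ β) :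
    ∃ γ : B ⥤ C, i ⋙ γ = α ∧ γ ⋙ f = β := by
  choose s hs using hsurj
  have hobj : ∀ a, f.obj (α.obj a) = β.obj (i.obj a) := fun a =>
    Functor.congr_obj sq a
  classical
  let G : B → C := fun b => if h : ∃ a, i.obj a = b then α.obj h.choose else s (β.obj b)
  have hG : ∀ b, f.obj (G b) = β.obj b := by
    intro b
    by_cases h : ∃ a, i.obj a = b
    · simp only [G, dif_pos h]
      rw [hobj, h.choose_spec]
    · simp only [G, dif_neg h, hs]
  let γ : B ⥤ C :=
    { obj := G
      map := fun {b b'} g => f.preimage (eqToHom (hG b) ≫ β.map g ≫ eqToHom (hG b').symm)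
      map_id := by intro b; apply f.map_injective; simp
      map_comp := by intro x y z g h; apply f.map_injective; simp }
  have hGi : ∀ a, G (i.obj a) = α.obj a := by
    intro a
    have h : ∃ a', i.obj a' = i.obj a := ⟨a, rfl⟩
    simp only [G, dif_pos h]
    exact congrArg α.obj (hinj h.choose_spec)
  refine ⟨γ, ?_, ?_⟩
  · refine CategoryTheory.Functor.ext (fun a => hGi a) ?_
    intro a a' g
    apply f.map_injective
    have hmap := Functor.congr_hom sq g
    simp only [Functor.comp_obj, Functor.comp_map, γ, Functor.map_comp, eqToHom_map,
      Functor.map_preimage] at hmap ⊢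
    rw [hmap]
    simp
  · refine CategoryTheory.Functor.ext (fun b => hG b) ?_
    intro b b' g
    simp [γ]

/-- A functor is an equivalence iff it is fully faithful and essentially surjective;
moreover, an equivalence which is surjective on objects has the right lifting property
with respect to all functors which are injective on objects. -/
theorem stmt4 {C D : Type*} [Category C] [Category D] (f : C ⥤ D) :
    (f.IsEquivalence ↔ (f.Full ∧ f.Faithful ∧ f.EssSurj)) ∧
    (f.IsEquivalence → Function.Surjective f.obj →
      ∀ (A B : Type*) (_ : Category A) (_ : Category B) (i : A ⥤ B),
        Function.Injective i.obj →
        ∀ (α : A ⥤ C) (β : B ⥤ D), α ⋙ f = i ⋙ β →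
          ∃ γ : B ⥤ C, i ⋙ γ = α ∧ γ ⋙ f = β) := by
  constructor
  · constructor
    · intro h
      exact ⟨inferInstance, inferInstance, inferInstance⟩
    · rintro ⟨h1, h2, h3⟩
      exact { }
  · intro he hsurj A B _ _ i hinj α β sq
    exact lift_aux f hsurj i hinj α β sq
end

section
/- Let f : C → D be an equivalence of categories which is surjective on objects, and let i : A → B be a functor which is injective on objects. Then every commutative square with i on the left and f on the right admits a strict diagonal lift: for functors α : A → C and β : B → D with f ∘ α = β ∘ i, there exists a functor γ : B → C with γ ∘ i = α and f ∘ γ = β. -/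
open CategoryTheory

/-- An equivalence of categories which is surjective on objects admits strict diagonal
lifts against functors which are injective on objects. -/
theorem stmt5 {A B C D : Type*} [Category A] [Category B] [Category C] [Category D]
    (f : C ⥤ D) (hf : f.IsEquivalence) (hsurj : Function.Surjective f.obj)
    (i : A ⥤ B) (hi : Function.Injective i.obj)
    (α : A ⥤ C) (β : B ⥤ D) (hsq : α ⋙ f = i ⋙ β) :
    ∃ γ : B ⥤ C, i ⋙ γ = α ∧ γ ⋙ f = β := by
  haveI := hf
  classical
  let ob : B → C := fun b =>
    if h : ∃ a, i.obj a = b then α.obj h.choose else (hsurj (β.obj b)).choose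
  have hfo : ∀ b, f.obj (ob b) = β.obj b := by
    intro b
    by_cases h : ∃ a, i.obj a = b
    · simp only [ob, dif_pos h]
      have h1 := Functor.congr_obj hsq h.choose
      simp only [Functor.comp_obj] at h1
      rw [h1, h.choose_spec]
    · simp only [ob, dif_neg h]
      exact (hsurj (β.obj b)).choose_spec
  have hia : ∀ a, ob (i.obj a) = α.obj a := by
    intro a
    have h : ∃ a', i.obj a' = i.obj a := ⟨a, rfl⟩
    simp only [ob, dif_pos h]
    exact congrArg α.obj (hi h.choose_spec)
  let γ : B ⥤ C :=
    { obj := ob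
      map := fun {b b'} φ =>
        f.preimage (eqToHom (hfo b) ≫ β.map φ ≫ eqToHom (hfo b').symm)
      map_id := by
        intro b
        apply f.map_injective
        simp
      map_comp := by
        intro b b' b'' φ ψ
        apply f.map_injective
        simp }
  refine ⟨γ, ?_, ?_⟩
  · refine CategoryTheory.Functor.ext (fun a => hia a) ?_
    intro a a' g
    apply f.map_injective
    have h1 := Functor.congr_hom hsq g
    simp only [Functor.comp_map] at h1
    simp [γ, h1, eqToHom_map]
  · refine CategoryTheory.Functor.ext (fun b => hfo b) ?_
    intro b b' φ
    simp [γ]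
end

section
/- Let f : C → D be an isofibration of categories (for every object c of C and every isomorphism u : f(c) → d in D there exists an isomorphism v : c → c' in C with f(v) = u), and let i : A → B be a functor which is injective on objects and an equivalence of categories admitting a retraction j : B → A with j ∘ i = id_A and a natural isomorphism u : i ∘ j ≅ id_B satisfying u ∘ i = id. Then every commutative square with i on the left and f on the right admits a strict diagonal lift. -/
open CategoryTheory

/-- `f` is an isofibration: every isomorphism starting at an object in the image of `f`
lifts to an isomorphism in the source with prescribed domain. -/
def IsIsofibration {C D : Type*} [Category C] [Category D] (f : C ⥤ D) : Prop :=
  ∀ (c : C) (d : D) (u : f.obj c ⟶ d), IsIso u →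
    ∃ (c' : C) (v : c ⟶ c') (_ : IsIso v) (h : f.obj c' = d), f.map v ≫ eqToHom h = u

/-- An isofibration has the strict right lifting property against a trivial cofibration,
i.e. a functor `i` which is injective on objects and admits a retraction `j` with
`i ⋙ j = 𝟭` together with a natural isomorphism `u : j ⋙ i ≅ 𝟭` satisfying `u ∘ i = id`. -/
theorem stmt7 {A B C D : Type*} [Category A] [Category B] [Category C] [Category D]
    (f : C ⥤ D) (hf : IsIsofibration f)
    (i : A ⥤ B) (hinj : Function.Injective i.obj)
    (j : B ⥤ A) (hji : i ⋙ j = 𝟭 A)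
    (u : j ⋙ i ≅ 𝟭 B)
    (hu : ∀ a : A, u.hom.app (i.obj a) =
      eqToHom (congrArg i.obj (Functor.congr_obj hji a)))
    (α : A ⥤ C) (β : B ⥤ D) (hsq : α ⋙ f = i ⋙ β) :
    ∃ ℓ : B ⥤ C, i ⋙ ℓ = α ∧ ℓ ⋙ f = β := by
  have hb1 : ∀ b : B, f.obj (α.obj (j.obj b)) = β.obj (i.obj (j.obj b)) :=
    fun b => Functor.congr_obj hsq (j.obj b)
  have key : ∀ b : B, ∃ (c' : C) (v : α.obj (j.obj b) ⟶ c') (_ : IsIso v)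
      (h : f.obj c' = β.obj b),
      (f.map v ≫ eqToHom h = eqToHom (hb1 b) ≫ β.map (u.hom.app b)) ∧
      ∀ (a : A) (ha : i.obj a = b), ∃ hc : c' = α.obj a,
        v ≫ eqToHom hc = eqToHom (by
          have : j.obj b = a := by rw [← ha]; exact Functor.congr_obj hji a
          exact congrArg α.obj this) := by
    intro b
    by_cases hex : ∃ a : A, i.obj a = b
    · obtain ⟨a, rfl⟩ := hex
      have hjb : j.obj (i.obj a) = a := Functor.congr_obj hji a
      refine ⟨α.obj a, eqToHom (congrArg α.obj hjb), inferInstance,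
        Functor.congr_obj hsq a, ?_, ?_⟩
      · rw [hu a]
        simp [eqToHom_map]
      · intro a' ha'
        obtain rfl := hinj ha'
        exact ⟨rfl, by simp⟩
    · push_neg at hex
      obtain ⟨c', v0, hv0, hobj, heq0⟩ :=
        hf _ _ (eqToHom (hb1 b) ≫ β.map (u.hom.app b)) inferInstance
      exact ⟨c', v0, hv0, hobj, heq0, fun a ha => absurd ha (hex a)⟩
  choose L v hv h heq hstrict using key
  haveI : ∀ b, IsIso (v b) := hv
  let ℓ : B ⥤ C :=
    { obj := L
      map := fun {b b'} g => inv (v b) ≫ α.map (j.map g) ≫ v b'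
      map_id := by intro b; simp
      map_comp := by intros; simp }
  refine ⟨ℓ, ?_, ?_⟩
  · refine CategoryTheory.Functor.ext (fun a => (hstrict (i.obj a) a rfl).choose) ?_
    intro a a' g
    have e1 := (comp_eqToHom_iff _ _ _).mp (hstrict (i.obj a) a rfl).choose_spec
    have e2 := (comp_eqToHom_iff _ _ _).mp (hstrict (i.obj a') a' rfl).choose_spec
    have hjm := Functor.congr_hom hji g
    simp only [Functor.comp_map, Functor.id_map] at hjm
    show inv (v (i.obj a)) ≫ α.map (j.map (i.map g)) ≫ v (i.obj a') = _
    rw [IsIso.inv_comp_eq]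
    simp only [e1, e2, hjm]
    simp [eqToHom_map]
  · refine CategoryTheory.Functor.ext (fun b => h b) ?_
    intro b b' g
    have hfv : ∀ b, f.map (v b) =
        (eqToHom (hb1 b) ≫ β.map (u.hom.app b)) ≫ eqToHom (h b).symm :=
      fun b => (comp_eqToHom_iff _ _ _).mp (heq b)
    have hmid := Functor.congr_hom hsq (j.map g)
    simp only [Functor.comp_map] at hmid
    have hnat : i.map (j.map g) ≫ u.hom.app b' = u.hom.app b ≫ g := u.hom.naturality g
    show f.map (inv (v b) ≫ α.map (j.map g) ≫ v b') = _
    rw [Functor.map_comp, Functor.map_comp, Functor.map_inv, IsIso.inv_comp_eq,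
      hfv b, hfv b', hmid]
    simp only [Category.assoc, eqToHom_trans_assoc, eqToHom_refl, Category.id_comp]
    rw [← β.map_comp_assoc, hnat]
    simp
end

section
/- Pushouts of trivial cofibrations of categories are trivial cofibrations: given a pushout square of categories with left vertical functor i : A → B which is injective on objects and admits a retraction i' with i' ∘ i = id and a natural isomorphism u : i ∘ i' ≅ id satisfying u ∘ i = id, the pushout j : C → D of i along any functor f : A → C is injective on objects and an equivalence of categories admitting a retraction with the analogous properties. -/
open CategoryTheory

universe v u

namespace Stmt19Aux

variable {A B C : Type u} [Category.{v} A] [Category.{v} B] [Category.{v} C]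

/-- Object part of the explicit pushout. -/
structure P (_i' : B ⥤ A) (_f : A ⥤ C) : Type u where
  as : C ⊕ B

variable (i : A ⥤ B) (i' : B ⥤ A) (f : A ⥤ C)

def inlP (c : C) : P i' f := ⟨.inl c⟩
def inrP (b : B) : P i' f := ⟨.inr b⟩

def rho : P i' f → C
  | ⟨.inl c⟩ => c
  | ⟨.inr b⟩ => f.obj (i'.obj b)

@[simp] lemma rho_inl (c : C) : rho i' f (inlP i' f c) = c := rfl
@[simp] lemma rho_inr (b : B) : rho i' f (inrP i' f b) = f.obj (i'.obj b) := rfl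

instance : Category.{v} (P i' f) where
  Hom x y := rho i' f x ⟶ rho i' f y
  id x := 𝟙 (rho i' f x)
  comp g h := g ≫ h

@[simp] lemma P_id (x : P i' f) : 𝟙 x = 𝟙 (rho i' f x) := rfl
@[simp] lemma P_comp {x y z : P i' f} (g : x ⟶ y) (h : y ⟶ z) :
    g ≫ h = (g ≫ h : rho i' f x ⟶ rho i' f z) := rfl

lemma P_eqToHom {x y : P i' f} (h : x = y) :
    (eqToHom h : x ⟶ y) = eqToHom (congrArg (rho i' f) h) := by
  subst h; rfl

def jP : C ⥤ P i' f where
  obj := inlP i' f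
  map κ := κ

def prP : P i' f ⥤ C where
  obj := rho i' f
  map κ := κ

lemma jP_prP : jP i' f ⋙ prP i' f = 𝟭 C := rfl

open Classical in
noncomputable def gPObj (b : B) : P i' f :=
  if b ∈ Set.range i.obj then inlP i' f (f.obj (i'.obj b)) else inrP i' f b

lemma rho_gPObj (b : B) : rho i' f (gPObj i i' f b) = f.obj (i'.obj b) := by
  unfold gPObj; split <;> rfl

noncomputable def gP : B ⥤ P i' f where
  obj := gPObj i i' f
  map {b b'} φ :=
    (eqToHom (rho_gPObj i i' f b) ≫ f.map (i'.map φ) ≫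
      eqToHom (rho_gPObj i i' f b').symm : rho i' f _ ⟶ rho i' f _)
  map_id b := by simp
  map_comp φ ψ := by simp

@[simp] lemma gP_obj (b : B) : (gP i i' f).obj b = gPObj i i' f b := rfl

lemma gPObj_i (hii' : i ⋙ i' = 𝟭 A) (a : A) :
    gPObj i i' f (i.obj a) = inlP i' f (f.obj a) := by
  unfold gPObj
  rw [if_pos ⟨a, rfl⟩]
  have h := Functor.congr_obj hii' a
  simp only [Functor.comp_obj, Functor.id_obj] at h
  rw [h]

lemma hsqP (hii' : i ⋙ i' = 𝟭 A) : i ⋙ gP i i' f = f ⋙ jP i' f := by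
  refine CategoryTheory.Functor.ext (fun a => gPObj_i i i' f hii' a) (fun a a' ψ => ?_)
  have hgen : ∀ (x y : P i' f) (hx : x = inlP i' f (f.obj a)) (hy : y = inlP i' f (f.obj a'))
      (m : x ⟶ y), @Eq (rho i' f x ⟶ rho i' f y) m
        (eqToHom (congrArg (rho i' f) hx) ≫ f.map ψ ≫ eqToHom (congrArg (rho i' f) hy).symm) →
      m = eqToHom hx ≫ (jP i' f).map (f.map ψ) ≫ eqToHom hy.symm := by
    rintro x y rfl rfl m h
    simp only [eqToHom_refl, Category.id_comp, Category.comp_id] at h ⊢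
    exact h
  refine hgen _ _ (gPObj_i i i' f hii' a) (gPObj_i i i' f hii' a') ((gP i i' f).map (i.map ψ)) ?_
  show (eqToHom _ ≫ f.map (i'.map (i.map ψ)) ≫ eqToHom _ : rho i' f _ ⟶ rho i' f _) = _
  have := Functor.congr_hom hii' ψ
  simp only [Functor.comp_map, Functor.id_map] at this
  rw [this]
  simp [eqToHom_map]

section UP

variable {T : Type*} [Category T] (s : C ⥤ T) (t : B ⥤ T)

def theta : P i' f → T
  | ⟨.inl c⟩ => s.obj c
  | ⟨.inr b⟩ => t.obj b

@[simp] lemma theta_inl (c : C) : theta i' f s t (inlP i' f c) = s.obj c := rfl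
@[simp] lemma theta_inr (b : B) : theta i' f s t (inrP i' f b) = t.obj b := rfl

variable (u : i' ⋙ i ≅ 𝟭 B)

def epsIso (hst : i ⋙ t = f ⋙ s) : ∀ x : P i' f, s.obj (rho i' f x) ≅ theta i' f s t x
  | ⟨.inl _⟩ => Iso.refl _
  | ⟨.inr b⟩ => eqToIso (Functor.congr_obj hst (i'.obj b)).symm ≪≫ t.mapIso (u.app b)

variable (hst : i ⋙ t = f ⋙ s)

@[simp] lemma epsIso_inl (c : C) :
    epsIso i i' f s t u hst (inlP i' f c) = Iso.refl _ := rfl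

@[simp] lemma epsIso_inr (b : B) :
    epsIso i i' f s t u hst (inrP i' f b) =
      eqToIso (Functor.congr_obj hst (i'.obj b)).symm ≪≫ t.mapIso (u.app b) := rfl

def wT : P i' f ⥤ T where
  obj := theta i' f s t
  map {x y} κ := (epsIso i i' f s t u hst x).inv ≫ s.map κ ≫ (epsIso i i' f s t u hst y).hom
  map_id x := by simp
  map_comp κ κ' := by simp

lemma jP_wT : jP i' f ⋙ wT i i' f s t u hst = s := by
  refine CategoryTheory.Functor.ext (fun c => rfl) (fun c c' κ => ?_)
  simp [wT, jP]
  exact (Category.id_comp _).symm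

lemma theta_gPObj (hst : i ⋙ t = f ⋙ s) (hii' : i ⋙ i' = 𝟭 A) (b : B) :
    theta i' f s t (gPObj i i' f b) = t.obj b := by
  unfold gPObj
  split
  · rename_i h
    obtain ⟨a, rfl⟩ := h
    show s.obj (f.obj (i'.obj (i.obj a))) = _
    have h := Functor.congr_obj hii' a
    simp only [Functor.comp_obj, Functor.id_obj] at h
    rw [h]
    have h2 := Functor.congr_obj hst a
    simp only [Functor.comp_obj] at h2
    exact h2.symm
  · rfl

lemma key (hii' : i ⋙ i' = 𝟭 A)
    (hu : ∀ a : A, u.hom.app (i.obj a) =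
      eqToHom (congrArg i.obj (Functor.congr_obj hii' a))) (b : B) :
    epsIso i i' f s t u hst (gPObj i i' f b) =
      eqToIso (congrArg s.obj (rho_gPObj i i' f b)) ≪≫
        eqToIso (Functor.congr_obj hst (i'.obj b)).symm ≪≫ t.mapIso (u.app b) ≪≫
        eqToIso (theta_gPObj i i' f s t hst hii' b).symm := by
  apply Iso.ext
  by_cases h : b ∈ Set.range i.obj
  · obtain ⟨a, rfl⟩ := h
    have hb : gPObj i i' f (i.obj a) = inlP i' f (f.obj a) := gPObj_i i i' f hii' a
    have hgen : ∀ (x : P i' f) (hx : x = inlP i' f (f.obj a)),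
        (epsIso i i' f s t u hst x).hom = eqToHom (by subst hx; rfl) := by
      intro x hx; subst hx; simp; rfl
    rw [hgen _ hb]
    simp only [Iso.trans_hom, eqToIso.hom, Functor.mapIso_hom, Iso.app_hom]
    rw [hu a]
    simp [eqToHom_map]
  · have hb : gPObj i i' f b = inrP i' f b := by unfold gPObj; rw [if_neg h]
    have hgen : ∀ (x : P i' f) (hx : x = inrP i' f b),
        (epsIso i i' f s t u hst x).hom =
          eqToHom (by subst hx; rfl) ≫
            (eqToIso (Functor.congr_obj hst (i'.obj b)).symm ≪≫ t.mapIso (u.app b)).hom ≫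
            eqToHom (by subst hx; rfl) := by
      intro x hx; subst hx; simp
      exact (eqToHom_trans_assoc _ _ _).symm
    rw [hgen _ hb]
    simp

lemma gP_wT (hii' : i ⋙ i' = 𝟭 A)
    (hu : ∀ a : A, u.hom.app (i.obj a) =
      eqToHom (congrArg i.obj (Functor.congr_obj hii' a))) :
    gP i i' f ⋙ wT i i' f s t u hst = t := by
  refine CategoryTheory.Functor.ext (fun b => theta_gPObj i i' f s t hst hii' b)
    (fun b b' φ => ?_)
  show (epsIso i i' f s t u hst ((gP i i' f).obj b)).inv ≫ s.map ((gP i i' f).map φ) ≫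
      (epsIso i i' f s t u hst ((gP i i' f).obj b')).hom = _
  simp only [gP_obj]
  rw [key i i' f s t u hst hii' hu, key i i' f s t u hst hii' hu]
  show _ ≫ s.map (eqToHom _ ≫ f.map (i'.map φ) ≫ eqToHom _) ≫ _ = _
  have hmid := Functor.congr_hom hst (i'.map φ)
  simp only [Functor.comp_map] at hmid
  have hnat := u.hom.naturality φ
  simp only [Functor.comp_map, Functor.id_map] at hnat
  simp only [Iso.trans_inv, Iso.trans_hom, eqToIso.inv, eqToIso.hom, Functor.mapIso_inv,
    Functor.mapIso_hom, Functor.map_comp, eqToHom_map, Category.assoc, eqToHom_trans,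
    eqToHom_trans_assoc, eqToHom_refl, Category.comp_id, Category.id_comp]
  have hmid2 : s.map (f.map (i'.map φ)) =
      eqToHom (Functor.congr_obj hst (i'.obj b)).symm ≫ t.map (i.map (i'.map φ)) ≫
        eqToHom (Functor.congr_obj hst (i'.obj b')) := by
    rw [hmid]; simp
  rw [hmid2]
  simp only [Iso.app_hom, Iso.app_inv, Category.assoc, eqToHom_trans_assoc, eqToHom_refl,
    Category.id_comp]
  simp only [← Functor.map_comp, ← Category.assoc]
  rw [Category.assoc (u.inv.app b), hnat]
  simp
  rfl

end UP

def etaIso (x : P i' f) : inlP i' f (rho i' f x) ≅ x where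
  hom := (𝟙 (rho i' f x) : rho i' f (inlP i' f (rho i' f x)) ⟶ rho i' f x)
  inv := (𝟙 (rho i' f x) : rho i' f x ⟶ rho i' f (inlP i' f (rho i' f x)))
  hom_inv_id := by exact Category.id_comp _
  inv_hom_id := by exact Category.id_comp _

lemma etaIso_nat {x y : P i' f} (ψ : x ⟶ y) :
    (jP i' f).map ((prP i' f).map ψ) ≫ (etaIso i' f y).hom =
      (etaIso i' f x).hom ≫ ψ := by
  simp [jP, prP, etaIso]
  exact (Category.comp_id ψ).trans (Category.id_comp ψ).symm

lemma etaIso_hom_eq (c : C) (x : P i' f) (hx : x = inlP i' f c) :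
    (etaIso i' f x).hom = eqToHom (by subst hx; rfl) := by
  subst hx
  show 𝟙 _ = _
  simp [P_eqToHom]
  rfl

end Stmt19Aux

/-- Pushouts of trivial cofibrations of categories are trivial cofibrations: given a
pushout square of categories whose left leg `i : A ⥤ B` is injective on objects and
admits a retraction `i'` with `i ⋙ i' = 𝟭` and a natural isomorphism `u : i' ⋙ i ≅ 𝟭`
with `u ∘ i = id`, the pushout `j : C ⥤ D` of `i` along `f : A ⥤ C` is injective on
objects and an equivalence of categories admitting a retraction with the analogous
properties. -/
theorem stmt19 {A B C D : Type u} [Category.{v} A] [Category.{v} B] [Category.{v} C]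
    [Category.{v} D]
    (i : A ⥤ B) (hinj : Function.Injective i.obj)
    (i' : B ⥤ A) (hii' : i ⋙ i' = 𝟭 A)
    (u : i' ⋙ i ≅ 𝟭 B)
    (hu : ∀ a : A, u.hom.app (i.obj a) =
      eqToHom (congrArg i.obj (Functor.congr_obj hii' a)))
    (f : A ⥤ C) (j : C ⥤ D) (g : B ⥤ D)
    (hsq : i ⋙ g = f ⋙ j)
    (huniv : ∀ (T : Type u) (_ : Category.{v} T) (s : C ⥤ T) (t : B ⥤ T),
      i ⋙ t = f ⋙ s → ∃! w : D ⥤ T, j ⋙ w = s ∧ g ⋙ w = t) :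
    Function.Injective j.obj ∧ j.IsEquivalence ∧
    ∃ (j' : D ⥤ C) (hjj' : j ⋙ j' = 𝟭 C) (v : j' ⋙ j ≅ 𝟭 D),
      ∀ c : C, v.hom.app (j.obj c) =
        eqToHom (congrArg j.obj (Functor.congr_obj hjj' c)) := by
  classical
  obtain ⟨w₁, ⟨hjw₁, hgw₁⟩, -⟩ := huniv (Stmt19Aux.P i' f) inferInstance (Stmt19Aux.jP i' f)
    (Stmt19Aux.gP i i' f) (Stmt19Aux.hsqP i i' f hii')
  have hjw₂ : Stmt19Aux.jP i' f ⋙ Stmt19Aux.wT i i' f j g u hsq = j :=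
    Stmt19Aux.jP_wT i i' f j g u hsq
  have hgw₂ : Stmt19Aux.gP i i' f ⋙ Stmt19Aux.wT i i' f j g u hsq = g :=
    Stmt19Aux.gP_wT i i' f j g u hsq hii' hu
  set w₂ := Stmt19Aux.wT i i' f j g u hsq with hw₂def
  obtain ⟨w₀, -, huniq⟩ := huniv D inferInstance j g hsq
  have hwc : w₁ ⋙ w₂ = 𝟭 D := by
    have h1 : w₁ ⋙ w₂ = w₀ := by
      refine huniq (w₁ ⋙ w₂) ⟨?_, ?_⟩
      · show (j ⋙ w₁) ⋙ w₂ = j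
        rw [hjw₁]; exact hjw₂
      · show (g ⋙ w₁) ⋙ w₂ = g
        rw [hgw₁]; exact hgw₂
    have h2 : 𝟭 D = w₀ := huniq (𝟭 D) ⟨Functor.comp_id j, Functor.comp_id g⟩
    rw [h1, h2]
  set j' : D ⥤ C := w₁ ⋙ Stmt19Aux.prP i' f with hj'def
  have hjj' : j ⋙ j' = 𝟭 C := by
    show (j ⋙ w₁) ⋙ Stmt19Aux.prP i' f = 𝟭 C
    rw [hjw₁]
    exact Stmt19Aux.jP_prP i' f
  have h1 : ∀ d : D, (j' ⋙ j).obj d =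
      w₂.obj (Stmt19Aux.inlP i' f (Stmt19Aux.rho i' f (w₁.obj d))) := fun d =>
    (Functor.congr_obj hjw₂ (Stmt19Aux.rho i' f (w₁.obj d))).symm
  obtain ⟨v, hvapp⟩ : ∃ v : j' ⋙ j ≅ 𝟭 D, ∀ d, v.hom.app d =
      eqToHom (h1 d) ≫ w₂.map (Stmt19Aux.etaIso i' f (w₁.obj d)).hom ≫
        eqToHom (Functor.congr_obj hwc d) := by
    refine ⟨NatIso.ofComponents
      (fun d => eqToIso (h1 d) ≪≫ w₂.mapIso (Stmt19Aux.etaIso i' f (w₁.obj d)) ≪≫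
        eqToIso (Functor.congr_obj hwc d)) (fun {d d'} φ => ?_), fun d => by simp⟩
    have hψ := Functor.congr_hom hjw₂.symm ((Stmt19Aux.prP i' f).map (w₁.map φ))
    have hφ := Functor.congr_hom hwc.symm φ
    simp only [Functor.id_map] at hφ
    show j.map ((Stmt19Aux.prP i' f).map (w₁.map φ)) ≫ _ = _ ≫ (𝟭 D).map φ
    simp only [Functor.id_map]
    rw [hψ]
    conv_rhs => rw [hφ]
    simp only [Iso.trans_hom, eqToIso.hom, Functor.mapIso_hom, Functor.comp_map,
      Category.assoc, eqToHom_trans, eqToHom_trans_assoc, eqToHom_refl,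
      Category.comp_id, Category.id_comp]
    rw [← Category.assoc, ← Category.assoc]
    erw [eqToHom_refl, Category.comp_id]
    erw [Category.id_comp, Category.id_comp]
    simp only [← Category.assoc, ← w₂.map_comp]
    have key : w₂.map ((Stmt19Aux.jP i' f).map ((Stmt19Aux.prP i' f).map (w₁.map φ))) ≫
        w₂.map (Stmt19Aux.etaIso i' f (w₁.obj d')).hom =
        w₂.map ((Stmt19Aux.etaIso i' f (w₁.obj d)).hom ≫ w₁.map φ) :=
      (w₂.map_comp _ _).symm.trans (congrArg w₂.map (Stmt19Aux.etaIso_nat i' f (w₁.map φ)))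
    exact (Category.assoc _ _ _).symm.trans (eq_whisker key _)
  have hinj' : Function.Injective j.obj := by
    intro x y h
    have hx := Functor.congr_obj hjj' x
    have hy := Functor.congr_obj hjj' y
    simp only [Functor.comp_obj, Functor.id_obj] at hx hy
    rw [← hx, ← hy, h]
  refine ⟨hinj', (CategoryTheory.Equivalence.mk j j' (eqToIso hjj'.symm) v).isEquivalence_functor,
    j', hjj', v, fun c => ?_⟩
  have hx : w₁.obj (j.obj c) = Stmt19Aux.inlP i' f c := Functor.congr_obj hjw₁ c
  have heta := Stmt19Aux.etaIso_hom_eq i' f c (w₁.obj (j.obj c)) hx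
  rw [hvapp (j.obj c), heta]
  simp [eqToHom_map]
end
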